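/- Let d ≥ 1, let γ : (0,1] → [0,∞) be measurable with ∫_{B_1(0)} |z| γ(|z|) dz < ∞, and set M = ∫_{B_1(0)} z_1² γ(|z|) dz. Let x ∈ ℝ^d and let u : ℝ^d → ℝ be twice continuously differentiable on a neighborhood of x. Then lim_{δ→0⁺} δ^{-(d+2)} ∫_{B_δ(x)} γ(|y−x|/δ) (u(y) − u(x)) dy = (M/2) · Δu(x), where Δu(x) is the Laplacian of u at x (the trace of the Hessian of u at x). -/

import Mathlib

open MeasureTheory Asymptotics Filter
set_option maxHeartbeats 4000000

section Aux

variable {d : ℕ}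

theorem taylor2_isLittleO {E : Type*} [NormedAddCommGroup E] [NormedSpace ℝ E]
    {u : E → ℝ} {x : E} (hu : ContDiffAt ℝ 2 u x) :
    (fun h : E => u (x + h) - u x - fderiv ℝ u x h
      - (1/2) * fderiv ℝ (fderiv ℝ u) x h h) =o[nhds 0] (fun h => ‖h‖ ^ 2) := by
  set L := fderiv ℝ u x with hL
  set A := fderiv ℝ (fderiv ℝ u) x with hA
  have hsymm : ∀ v w, A v w = A w v := (hu.isSymmSndFDerivAt (by norm_num)).eq
  have hder : ∀ᶠ y in nhds x, HasFDerivAt u (fderiv ℝ u y) y := by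
    filter_upwards [hu.eventually (by norm_num)] with y hy
    exact (hy.differentiableAt (by norm_num)).hasFDerivAt
  have hA' : HasFDerivAt (fderiv ℝ u) A x :=
    ((hu.fderiv_right (m := 1) (by norm_num)).differentiableAt (by norm_num)).hasFDerivAt
  have hlo := hA'.isLittleO
  rw [isLittleO_iff]
  intro c hc
  have h2 : ∀ᶠ y in nhds x, ‖fderiv ℝ u y - L - A (y - x)‖ ≤ c / 2 * ‖y - x‖ :=
    isLittleO_iff.1 hlo (by positivity)
  obtain ⟨r, hr, hball⟩ := Metric.eventually_nhds_iff_ball.1 (hder.and h2)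
  have key : ∀ h : E, ‖h‖ < r / 2 →
      ‖u (x + h) - u x - L h - (1/2) * A h h‖ ≤ c * ‖‖h‖ ^ 2‖ := by
    intro h hh
    rcases eq_or_ne h 0 with rfl | hne
    · simp
    have hpos : 0 < ‖h‖ := norm_pos_iff.2 hne
    set s := Metric.ball x (2 * ‖h‖) with hsdef
    have hsub : s ⊆ Metric.ball x r := by
      apply Metric.ball_subset_ball; linarith
    set g : E → ℝ := fun y => u y - L (y - x) - (1/2) * A (y - x) (y - x) with hg
    have hgd : ∀ y ∈ s, HasFDerivWithinAt g (fderiv ℝ u y - L - A (y - x)) s y := by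
      intro y hy
      have h1 : HasFDerivAt u (fderiv ℝ u y) y := (hball y (hsub hy)).1
      have h2 : HasFDerivAt (fun y : E => L (y - x)) L y := by
        simpa using L.hasFDerivAt.sub_const (L x)
      have h3 : HasFDerivAt (fun y : E => A (y - x)) A y := by
        simpa using A.hasFDerivAt.sub_const (A x)
      have h4 : HasFDerivAt (fun y : E => A (y - x) (y - x))
          ((A (y - x)).comp (ContinuousLinearMap.id ℝ E) + A.flip (y - x)) y :=
        h3.clm_apply ((hasFDerivAt_id y).sub_const x)
      have h5 : HasFDerivAt (fun y : E => (1/2) * A (y - x) (y - x)) (A (y - x)) y := by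
        have := h4.const_mul (1/2 : ℝ)
        refine this.congr_fderiv ?_
        ext v
        simp only [ContinuousLinearMap.smul_apply, ContinuousLinearMap.add_apply,
          ContinuousLinearMap.coe_comp', Function.comp_apply, ContinuousLinearMap.coe_id',
          id_eq, ContinuousLinearMap.flip_apply, smul_eq_mul]
        rw [hsymm v (y - x)]
        ring
      exact ((h1.sub h2).sub h5).hasFDerivWithinAt
    have hbound : ∀ y ∈ s, ‖fderiv ℝ u y - L - A (y - x)‖ ≤ c / 2 * (2 * ‖h‖) := by
      intro y hy
      refine le_trans (hball y (hsub hy)).2 ?_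
      have : ‖y - x‖ ≤ 2 * ‖h‖ := by
        simp only [hsdef, Metric.mem_ball, dist_eq_norm] at hy
        linarith
      nlinarith [norm_nonneg (y - x)]
    have hx_mem : x ∈ s := Metric.mem_ball_self (by linarith)
    have hxh_mem : x + h ∈ s := by
      simp only [hsdef, Metric.mem_ball, dist_eq_norm, add_sub_cancel_left]
      linarith
    have hmvt := (convex_ball x (2 * ‖h‖)).norm_image_sub_le_of_norm_hasFDerivWithin_le
      hgd hbound hx_mem hxh_mem
    have hgx : g x = u x := by simp [hg]
    have hgxh : g (x + h) = u (x + h) - L h - (1/2) * A h h := by simp only [hg, add_sub_cancel_left]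
    rw [hgxh, hgx] at hmvt
    calc ‖u (x + h) - u x - L h - (1/2) * A h h‖
        = ‖u (x + h) - L h - (1/2) * A h h - u x‖ := by ring_nf
      _ ≤ c / 2 * (2 * ‖h‖) * ‖x + h - x‖ := hmvt
      _ = c * ‖‖h‖ ^ 2‖ := by
          rw [add_sub_cancel_left]
          rw [Real.norm_eq_abs, abs_of_nonneg (by positivity)]
          ring
  have : Metric.ball (0 : E) (r / 2) ∈ nhds (0 : E) :=
    Metric.ball_mem_nhds _ (by linarith)
  filter_upwards [this] with h hh
  exact key h (by simpa using hh)

theorem integral_ball_comp_isometry (e : EuclideanSpace ℝ (Fin d) ≃ₗᵢ[ℝ] EuclideanSpace ℝ (Fin d))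
    (g : EuclideanSpace ℝ (Fin d) → ℝ) :
    ∫ z in Metric.ball (0 : EuclideanSpace ℝ (Fin d)) 1, g (e z)
      = ∫ z in Metric.ball (0 : EuclideanSpace ℝ (Fin d)) 1, g z := by
  have h1 := (e.measurePreserving).setIntegral_preimage_emb
    (e.toHomeomorph.measurableEmbedding) g (Metric.ball (0 : EuclideanSpace ℝ (Fin d)) 1)
  rw [← h1]
  congr 1
  rw [e.preimage_ball]
  simp

-- coordinate flip isometry
noncomputable def flipCoord (i : Fin d) : EuclideanSpace ℝ (Fin d) ≃ₗᵢ[ℝ] EuclideanSpace ℝ (Fin d) :=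
  LinearIsometryEquiv.piLpCongrRight 2
    (fun j => if j = i then LinearIsometryEquiv.neg ℝ else LinearIsometryEquiv.refl ℝ ℝ)

theorem flipCoord_apply (i j : Fin d) (z : EuclideanSpace ℝ (Fin d)) :
    flipCoord i z j = if j = i then -z j else z j := by
  simp only [flipCoord, LinearIsometryEquiv.piLpCongrRight_apply]
  by_cases h : j = i
  · subst h; simp
  · simp [h]

theorem integral_odd_coord (γ : ℝ → ℝ) {i j : Fin d} (hij : i ≠ j) :
    ∫ z in Metric.ball (0 : EuclideanSpace ℝ (Fin d)) 1, γ ‖z‖ * (z i * z j) = 0 := by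
  have h := integral_ball_comp_isometry (flipCoord i) (fun z => γ ‖z‖ * (z i * z j))
  have h2 : ∀ z : EuclideanSpace ℝ (Fin d),
      γ ‖flipCoord i z‖ * (flipCoord i z i * flipCoord i z j)
        = -(γ ‖z‖ * (z i * z j)) := by
    intro z
    rw [(flipCoord i).norm_map, flipCoord_apply, flipCoord_apply, if_pos rfl,
      if_neg (Ne.symm hij)]
    ring
  simp only [h2, integral_neg] at h
  linarith

theorem integral_sq_coord (γ : ℝ → ℝ) (hd : 1 ≤ d) (i : Fin d) :
    ∫ z in Metric.ball (0 : EuclideanSpace ℝ (Fin d)) 1, γ ‖z‖ * (z i)^2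
      = ∫ z in Metric.ball (0 : EuclideanSpace ℝ (Fin d)) 1, γ ‖z‖ * (z ⟨0, hd⟩)^2 := by
  set e := LinearIsometryEquiv.piLpCongrLeft 2 ℝ ℝ (Equiv.swap i ⟨0, hd⟩) with he
  have h := integral_ball_comp_isometry e (fun z => γ ‖z‖ * (z ⟨0, hd⟩)^2)
  have h2 : ∀ z : EuclideanSpace ℝ (Fin d),
      γ ‖e z‖ * (e z ⟨0, hd⟩)^2 = γ ‖z‖ * (z i)^2 := by
    intro z
    rw [e.norm_map]
    congr 2
    simp only [he, LinearIsometryEquiv.piLpCongrLeft_apply]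
    simp only [Equiv.piCongrLeft'_apply, Equiv.symm_symm, Equiv.swap_apply_right,
      Equiv.symm_swap]
  simp only [h2] at h
  exact h

noncomputable def negIso (d : ℕ) :
    EuclideanSpace ℝ (Fin d) ≃ₗᵢ[ℝ] EuclideanSpace ℝ (Fin d) :=
  LinearIsometryEquiv.neg ℝ

theorem negIso_apply (z : EuclideanSpace ℝ (Fin d)) : negIso d z = -z := rfl

theorem integral_odd_linear (γ : ℝ → ℝ) (L : EuclideanSpace ℝ (Fin d) →L[ℝ] ℝ) :
    ∫ z in Metric.ball (0 : EuclideanSpace ℝ (Fin d)) 1, γ ‖z‖ * L z = 0 := by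
  have h := integral_ball_comp_isometry (negIso d) (fun z => γ ‖z‖ * L z)
  have h2 : ∀ z : EuclideanSpace ℝ (Fin d),
      γ ‖negIso d z‖ * L (negIso d z) = -(γ ‖z‖ * L z) := by
    intro z
    rw [negIso_apply, norm_neg, map_neg]
    ring
  simp only [h2, integral_neg] at h
  linarith

theorem abs_coord_le_norm (z : EuclideanSpace ℝ (Fin d)) (i : Fin d) : |z i| ≤ ‖z‖ := by
  have h := EuclideanSpace.norm_eq z
  rw [h]
  rw [← Real.sqrt_sq_eq_abs]
  apply Real.sqrt_le_sqrt
  have : ‖z i‖ ^ 2 ≤ ∑ j, ‖z j‖ ^ 2 :=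
    Finset.single_le_sum (f := fun j => ‖z j‖ ^ 2) (fun j _ => by positivity)
      (Finset.mem_univ i)
  simpa using this

theorem sum_single_eq (z : EuclideanSpace ℝ (Fin d)) :
    ∑ i, z i • EuclideanSpace.single i (1 : ℝ) = z := by
  have := (EuclideanSpace.basisFun (Fin d) ℝ).sum_repr z
  simpa [EuclideanSpace.basisFun_apply, EuclideanSpace.basisFun_repr] using this

theorem bilin_expand (A : EuclideanSpace ℝ (Fin d) →L[ℝ] EuclideanSpace ℝ (Fin d) →L[ℝ] ℝ)
    (z : EuclideanSpace ℝ (Fin d)) :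
    A z z = ∑ i, ∑ j, (z i * z j) *
      A (EuclideanSpace.single i (1:ℝ)) (EuclideanSpace.single j (1:ℝ)) := by
  have expand : ∀ w : EuclideanSpace ℝ (Fin d) →L[ℝ] ℝ,
      w z = ∑ j, z j * w (EuclideanSpace.single j (1:ℝ)) := by
    intro w
    conv_lhs => rw [← sum_single_eq z]
    rw [map_sum]
    exact Finset.sum_congr rfl fun j _ => by rw [_root_.map_smul, smul_eq_mul]
  calc A z z = ∑ j, z j * A z (EuclideanSpace.single j 1) := expand (A z)
    _ = ∑ j, z j * ∑ i, z i * A (EuclideanSpace.single i 1) (EuclideanSpace.single j 1) := by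
        refine Finset.sum_congr rfl fun j _ => ?_
        congr 1
        have h0 : A z (EuclideanSpace.single j 1)
            = (A.flip (EuclideanSpace.single j 1)) z := rfl
        rw [h0, expand]
        simp [ContinuousLinearMap.flip_apply]
    _ = ∑ i, ∑ j, (z i * z j) *
        A (EuclideanSpace.single i (1:ℝ)) (EuclideanSpace.single j (1:ℝ)) := by
        simp only [Finset.mul_sum]
        rw [Finset.sum_comm]
        exact Finset.sum_congr rfl fun i _ => Finset.sum_congr rfl fun j _ => by ring

-- change of variables
theorem cov (x : EuclideanSpace ℝ (Fin d)) (δ : ℝ) (hδ : 0 < δ) (F : EuclideanSpace ℝ (Fin d) → ℝ) :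
    ∫ y in Metric.ball x δ, F y
      = δ ^ d * ∫ z in Metric.ball (0 : EuclideanSpace ℝ (Fin d)) 1, F (x + δ • z) := by
  have h1 : ∫ y in Metric.ball x δ, F y
      = ∫ z in Metric.ball (0 : EuclideanSpace ℝ (Fin d)) δ, F (x + z) := by
    have hmp := measurePreserving_add_left
      (volume : Measure (EuclideanSpace ℝ (Fin d))) x
    have hemb : MeasurableEmbedding (fun z : EuclideanSpace ℝ (Fin d) => x + z) :=
      (Homeomorph.addLeft x).measurableEmbedding
    have := hmp.setIntegral_preimage_emb hemb F (Metric.ball x δ)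
    rw [← this]
    congr 1
    ext z
    simp [dist_eq_norm]
  rw [h1]
  have h2 := Measure.setIntegral_comp_smul_of_pos (volume : Measure (EuclideanSpace ℝ (Fin d)))
    (fun z => F (x + z)) (Metric.ball (0 : EuclideanSpace ℝ (Fin d)) 1) hδ
  rw [smul_unitBall_of_pos hδ, finrank_euclideanSpace_fin] at h2
  rw [h2, smul_eq_mul, ← mul_assoc, mul_inv_cancel₀ (by positivity), one_mul]

end Aux

/-- The Laplacian of `u` at `x`: the trace of the Hessian (second iterated
Fréchet derivative) of `u` at `x`. -/
noncomputable def laplacian (d : ℕ) (u : EuclideanSpace ℝ (Fin d) → ℝ)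
    (x : EuclideanSpace ℝ (Fin d)) : ℝ :=
  ∑ i : Fin d, iteratedFDeriv ℝ 2 u x (fun _ => EuclideanSpace.single i (1 : ℝ))

theorem stmt_0 (d : ℕ) (hd : 1 ≤ d) (γ : ℝ → ℝ) (hγmeas : Measurable γ)
    (hγnonneg : ∀ s ∈ Set.Ioc (0 : ℝ) 1, 0 ≤ γ s)
    (hint : IntegrableOn (fun z : EuclideanSpace ℝ (Fin d) => ‖z‖ * γ ‖z‖)
      (Metric.ball (0 : EuclideanSpace ℝ (Fin d)) 1))
    (M : ℝ)
    (hM : M = ∫ z in Metric.ball (0 : EuclideanSpace ℝ (Fin d)) 1,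
      (z ⟨0, hd⟩) ^ 2 * γ ‖z‖)
    (x : EuclideanSpace ℝ (Fin d)) (u : EuclideanSpace ℝ (Fin d) → ℝ)
    (s : Set (EuclideanSpace ℝ (Fin d))) (hs : s ∈ nhds x) (hu : ContDiffOn ℝ 2 u s) :
    Filter.Tendsto
      (fun δ : ℝ =>
        (δ ^ (d + 2))⁻¹ * ∫ y in Metric.ball x δ, γ (‖y - x‖ / δ) * (u y - u x))
      (nhdsWithin 0 (Set.Ioi 0))
      (nhds ((M / 2) * laplacian d u x)) := by
  classical
  have hx : ContDiffAt ℝ 2 u x := hu.contDiffAt hs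
  set L := fderiv ℝ u x with hL
  set A := fderiv ℝ (fderiv ℝ u) x with hA
  set B1 := Metric.ball (0 : EuclideanSpace ℝ (Fin d)) 1 with hB1
  haveI : Nonempty (Fin d) := ⟨⟨0, hd⟩⟩
  haveI : Nontrivial (EuclideanSpace ℝ (Fin d)) := by
    refine ⟨0, EuclideanSpace.single ⟨0, hd⟩ (1:ℝ), fun h => ?_⟩
    have := congrArg norm h
    rw [norm_zero, EuclideanSpace.norm_single] at this
    norm_num at this
  -- laplacian as sum of diagonal entries of A
  have hlap : laplacian d u x
      = ∑ i, A (EuclideanSpace.single i (1:ℝ)) (EuclideanSpace.single i (1:ℝ)) := by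
    unfold laplacian
    exact Finset.sum_congr rfl fun i _ => by rw [iteratedFDeriv_two_apply]
  -- a.e. facts
  have hae : ∀ᵐ z ∂(volume.restrict B1), 0 ≤ γ ‖z‖ ∧ ‖z‖ ≤ 1 := by
    have h1 : ∀ᵐ z ∂(volume.restrict B1), z ∈ B1 := ae_restrict_mem measurableSet_ball
    have h2 : ∀ᵐ z ∂(volume.restrict B1), z ≠ (0 : EuclideanSpace ℝ (Fin d)) := by
      refine ae_restrict_of_ae ?_
      rw [ae_iff]
      have : {z : EuclideanSpace ℝ (Fin d) | ¬z ≠ 0} = {0} := by ext z; simp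
      rw [this]
      exact measure_singleton 0
    filter_upwards [h1, h2] with z hz hz0
    have hpos : 0 < ‖z‖ := norm_pos_iff.2 hz0
    have hlt : ‖z‖ < 1 := by simpa [hB1, Metric.mem_ball, dist_zero_right] using hz
    exact ⟨hγnonneg _ ⟨hpos, hlt.le⟩, hlt.le⟩
  -- domination helper
  have hdom : ∀ (w : EuclideanSpace ℝ (Fin d) → ℝ),
      AEStronglyMeasurable w (volume.restrict B1) → ∀ (K : ℝ),
      (∀ᵐ z ∂(volume.restrict B1), |w z| ≤ K * ‖z‖) →
      IntegrableOn (fun z => γ ‖z‖ * w z) B1 := by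
    intro w hw K hK
    refine Integrable.mono' (g := fun z => K * (‖z‖ * γ ‖z‖)) (hint.const_mul K)
      (((hγmeas.comp measurable_norm).aestronglyMeasurable).mul hw) ?_
    filter_upwards [hae, hK] with z hz hKz
    rw [Real.norm_eq_abs, abs_mul, abs_of_nonneg hz.1]
    calc γ ‖z‖ * |w z| ≤ γ ‖z‖ * (K * ‖z‖) := mul_le_mul_of_nonneg_left hKz hz.1
      _ = K * (‖z‖ * γ ‖z‖) := by ring
  -- Taylor estimate
  have htay := taylor2_isLittleO hx
  obtain ⟨ρ, hρ, hρball⟩ := Metric.eventually_nhds_iff_ball.1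
    (isLittleO_iff.1 htay one_pos)
  set C : ℝ := 1 + ‖A‖ with hC
  have hCpos : 0 < C := by rw [hC]; positivity
  have htb : ∀ h : EuclideanSpace ℝ (Fin d), ‖h‖ < ρ →
      |u (x + h) - u x - L h| ≤ C * ‖h‖ ^ 2 := by
    intro h hh
    have h1 := hρball h (by simpa [dist_zero_right] using hh)
    rw [one_mul, Real.norm_eq_abs, Real.norm_eq_abs,
      abs_of_nonneg (sq_nonneg ‖h‖)] at h1
    have h4 : |A h h| ≤ ‖A‖ * ‖h‖ ^ 2 := by
      have h5 : ‖A h h‖ ≤ ‖A h‖ * ‖h‖ := (A h).le_opNorm h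
      have h6 : ‖A h‖ ≤ ‖A‖ * ‖h‖ := A.le_opNorm h
      have h7 : ‖A h‖ * ‖h‖ ≤ (‖A‖ * ‖h‖) * ‖h‖ :=
        mul_le_mul_of_nonneg_right h6 (norm_nonneg h)
      calc |A h h| ≤ ‖A h‖ * ‖h‖ := h5
        _ ≤ ‖A‖ * ‖h‖ ^ 2 := by nlinarith
    have h8 : u (x + h) - u x - L h
        = (u (x + h) - u x - L h - 1/2 * A h h) + 1/2 * A h h := by ring
    have h9 : |(1/2 : ℝ) * A h h| ≤ ‖A‖ * ‖h‖ ^ 2 := by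
      rw [abs_mul, abs_of_nonneg (by norm_num : (0:ℝ) ≤ 1/2)]
      nlinarith [abs_nonneg (A h h)]
    calc |u (x + h) - u x - L h|
        = |(u (x + h) - u x - L h - 1/2 * A h h) + 1/2 * A h h| := by rw [← h8]
      _ ≤ |u (x + h) - u x - L h - 1/2 * A h h| + |(1/2:ℝ) * A h h| := abs_add_le _ _
      _ ≤ ‖h‖ ^ 2 + ‖A‖ * ‖h‖ ^ 2 := add_le_add h1 h9
      _ = C * ‖h‖ ^ 2 := by rw [hC]; ring
  -- continuity neighborhood
  obtain ⟨r₁, hr₁, hball₁⟩ := Metric.mem_nhds_iff.1 hs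
  have hcont : ContinuousOn u (Metric.ball x r₁) := hu.continuousOn.mono hball₁
  set δ₀ : ℝ := min ρ r₁ with hδ₀def
  have hδ₀ : 0 < δ₀ := lt_min hρ hr₁
  -- the rescaled integrand
  set Fm : ℝ → EuclideanSpace ℝ (Fin d) → ℝ :=
    fun δ z => γ ‖z‖ * ((δ ^ 2)⁻¹ * (u (x + δ • z) - u x - δ * L z)) with hFm
  -- measurability
  have hcomp : ∀ δ ∈ Set.Ioo (0:ℝ) δ₀,
      ContinuousOn (fun z : EuclideanSpace ℝ (Fin d) => u (x + δ • z)) B1 := by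
    intro δ hδ
    refine hcont.comp (Continuous.continuousOn (continuous_const.add (continuous_id.const_smul δ))) ?_
    intro z hz
    have hz1 : ‖z‖ < 1 := by simpa [hB1, dist_zero_right] using hz
    have : ‖δ • z‖ < r₁ := by
      rw [norm_smul, Real.norm_eq_abs, abs_of_pos hδ.1]
      calc δ * ‖z‖ ≤ δ * 1 := by nlinarith [norm_nonneg z, hδ.1]
        _ = δ := mul_one δ
        _ < δ₀ := hδ.2
        _ ≤ r₁ := min_le_right _ _
    simpa [Metric.mem_ball, dist_eq_norm, add_sub_cancel_left] using this
  have hmeas' : ∀ δ ∈ Set.Ioo (0:ℝ) δ₀,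
      AEStronglyMeasurable (Fm δ) (volume.restrict B1) := by
    intro δ hδ
    apply ((hγmeas.comp measurable_norm).aestronglyMeasurable).mul
    apply ContinuousOn.aestronglyMeasurable _ measurableSet_ball
    exact continuousOn_const.mul
      (((hcomp δ hδ).sub continuousOn_const).sub
        (continuous_const.mul L.continuous).continuousOn)
  -- key pointwise bound for Fm
  have hFbound : ∀ δ ∈ Set.Ioo (0:ℝ) δ₀,
      ∀ᵐ z ∂(volume.restrict B1), ‖Fm δ z‖ ≤ C * (‖z‖ * γ ‖z‖) := by
    intro δ hδ
    filter_upwards [hae] with z hz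
    have hδz : ‖δ • z‖ < ρ := by
      rw [norm_smul, Real.norm_eq_abs, abs_of_pos hδ.1]
      calc δ * ‖z‖ ≤ δ * 1 := by nlinarith [hδ.1]
        _ = δ := mul_one δ
        _ < δ₀ := hδ.2
        _ ≤ ρ := min_le_left _ _
    have h1 := htb (δ • z) hδz
    have hLs : L (δ • z) = δ * L z := by rw [_root_.map_smul]; rfl
    have hns : ‖δ • z‖ ^ 2 = δ ^ 2 * ‖z‖ ^ 2 := by
      rw [norm_smul, Real.norm_eq_abs, abs_of_pos hδ.1]; ring
    rw [hLs, hns] at h1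
    have hb2 : |(δ ^ 2)⁻¹ * (u (x + δ • z) - u x - δ * L z)| ≤ C * ‖z‖ ^ 2 := by
      rw [abs_mul, abs_of_nonneg (by positivity : (0:ℝ) ≤ (δ ^ 2)⁻¹)]
      have hδ2' : (0:ℝ) ≤ (δ ^ 2)⁻¹ := by positivity
      calc (δ ^ 2)⁻¹ * |u (x + δ • z) - u x - δ * L z|
          ≤ (δ ^ 2)⁻¹ * (C * (δ ^ 2 * ‖z‖ ^ 2)) :=
            mul_le_mul_of_nonneg_left h1 hδ2'
        _ = C * ‖z‖ ^ 2 := by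
            have hδne : (δ:ℝ) ^ 2 ≠ 0 := pow_ne_zero 2 (ne_of_gt hδ.1)
            rw [mul_left_comm, inv_mul_cancel_left₀ hδne]
    have hnorm : ‖Fm δ z‖ = |γ ‖z‖ * ((δ ^ 2)⁻¹ * (u (x + δ • z) - u x - δ * L z))| := by
      simp only [hFm, Real.norm_eq_abs]
    rw [hnorm, abs_mul, abs_of_nonneg hz.1]
    calc γ ‖z‖ * |(δ ^ 2)⁻¹ * (u (x + δ • z) - u x - δ * L z)|
        ≤ γ ‖z‖ * (C * ‖z‖ ^ 2) := mul_le_mul_of_nonneg_left hb2 hz.1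
      _ ≤ γ ‖z‖ * (C * ‖z‖) := by
          apply mul_le_mul_of_nonneg_left _ hz.1
          have : ‖z‖ ^ 2 ≤ ‖z‖ := by nlinarith [norm_nonneg z, hz.2]
          nlinarith
      _ = C * (‖z‖ * γ ‖z‖) := by ring
  -- pointwise limit
  have hptw : ∀ z : EuclideanSpace ℝ (Fin d),
      Tendsto (fun δ : ℝ => Fm δ z) (nhdsWithin 0 (Set.Ioi 0))
        (nhds (γ ‖z‖ * ((1/2) * A z z))) := by
    intro z
    apply Tendsto.const_mul
    rcases eq_or_ne z 0 with rfl | hz0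
    · have : ∀ δ : ℝ, (δ ^ 2)⁻¹ * (u (x + δ • (0:EuclideanSpace ℝ (Fin d))) - u x
          - δ * L 0) = 0 := by
        intro δ; simp
      simp only [this, map_zero]
      simpa using tendsto_const_nhds
    · have hφ : Tendsto
          (fun h : EuclideanSpace ℝ (Fin d) =>
            (u (x + h) - u x - L h - (1/2) * A h h) / ‖h‖ ^ 2)
          (nhds 0) (nhds 0) := by
        refine (isLittleO_iff_tendsto fun h hh => ?_).1 htay
        have : h = 0 := by
          have := sq_eq_zero_iff.1 hh
          exact norm_eq_zero.1 this
        simp [this]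
      have hpath : Tendsto (fun δ : ℝ => δ • z) (nhdsWithin 0 (Set.Ioi 0))
          (nhds (0 : EuclideanSpace ℝ (Fin d))) := by
        have hc : Continuous (fun δ : ℝ => δ • z) := continuous_id.smul continuous_const
        have := hc.tendsto 0
        simpa using this.mono_left nhdsWithin_le_nhds
      have h2 := (hφ.comp hpath).mul_const (‖z‖ ^ 2)
      rw [zero_mul] at h2
      have heq : ∀ᶠ δ in nhdsWithin (0:ℝ) (Set.Ioi 0),
          (u (x + δ • z) - u x - L (δ • z) - (1/2) * A (δ • z) (δ • z)) / ‖δ • z‖ ^ 2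
            * ‖z‖ ^ 2
          = (δ ^ 2)⁻¹ * (u (x + δ • z) - u x - δ * L z) - (1/2) * A z z := by
        filter_upwards [self_mem_nhdsWithin] with δ hδ
        have hδ0 : (0:ℝ) < δ := hδ
        have hzn : (0:ℝ) < ‖z‖ := norm_pos_iff.2 hz0
        have hLs : L (δ • z) = δ * L z := by rw [_root_.map_smul]; rfl
        have hAs : A (δ • z) (δ • z) = δ ^ 2 * A z z := by
          rw [_root_.map_smul]
          simp only [ContinuousLinearMap.smul_apply, _root_.map_smul, smul_eq_mul]
          ring
        have hns : ‖δ • z‖ ^ 2 = δ ^ 2 * ‖z‖ ^ 2 := by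
          rw [norm_smul, Real.norm_eq_abs, abs_of_pos hδ0]; ring
        rw [hLs, hAs, hns]
        field_simp
      have h3 := h2.congr' heq
      have h4 := h3.add_const ((1/2) * A z z)
      rw [zero_add] at h4
      refine h4.congr fun δ => by ring
  -- dominated convergence
  have hmain : Tendsto (fun δ : ℝ => ∫ z in B1, Fm δ z) (nhdsWithin 0 (Set.Ioi 0))
      (nhds (∫ z in B1, γ ‖z‖ * ((1/2) * A z z))) := by
    refine tendsto_integral_filter_of_dominated_convergence
      (fun z => C * (‖z‖ * γ ‖z‖)) ?_ ?_ (hint.const_mul C) ?_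
    · filter_upwards [Ioo_mem_nhdsGT_of_mem (Set.mem_Ico.2 ⟨le_refl 0, hδ₀⟩)] with δ hδ
      exact hmeas' δ hδ
    · filter_upwards [Ioo_mem_nhdsGT_of_mem (Set.mem_Ico.2 ⟨le_refl 0, hδ₀⟩)] with δ hδ
      exact hFbound δ hδ
    · exact ae_of_all _ hptw
  -- value of the limit integral
  have hval : ∫ z in B1, γ ‖z‖ * ((1/2) * A z z)
      = (M / 2) * ∑ i, A (EuclideanSpace.single i (1:ℝ)) (EuclideanSpace.single i (1:ℝ)) := by
    have hexp : ∀ z : EuclideanSpace ℝ (Fin d), γ ‖z‖ * ((1/2) * A z z)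
        = ∑ i, ∑ j, ((1/2) * A (EuclideanSpace.single i (1:ℝ))
            (EuclideanSpace.single j (1:ℝ))) * (γ ‖z‖ * (z i * z j)) := by
      intro z
      rw [bilin_expand A z]
      rw [Finset.mul_sum, Finset.mul_sum]
      refine Finset.sum_congr rfl fun i _ => ?_
      rw [Finset.mul_sum, Finset.mul_sum]
      exact Finset.sum_congr rfl fun j _ => by ring
    have hintc : ∀ i j : Fin d,
        IntegrableOn (fun z : EuclideanSpace ℝ (Fin d) => γ ‖z‖ * (z i * z j)) B1 := by
      intro i j
      refine hdom _ ?_ 1 ?_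
      · exact ((EuclideanSpace.proj i).continuous.mul (EuclideanSpace.proj j).continuous).aestronglyMeasurable
      · filter_upwards [hae] with z hz
        rw [abs_mul, one_mul]
        calc |z i| * |z j| ≤ ‖z‖ * ‖z‖ :=
              mul_le_mul (abs_coord_le_norm z i) (abs_coord_le_norm z j)
                (abs_nonneg _) (norm_nonneg _)
          _ ≤ 1 * ‖z‖ := by nlinarith [norm_nonneg z, hz.2]
          _ = ‖z‖ := one_mul _
    have e1 : ∫ z in B1, γ ‖z‖ * ((1/2) * A z z)
        = ∫ z in B1, ∑ i, ∑ j, ((1/2) * A (EuclideanSpace.single i (1:ℝ))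
            (EuclideanSpace.single j (1:ℝ))) * (γ ‖z‖ * (z i * z j)) :=
      integral_congr_ae (Eventually.of_forall hexp)
    have e3 : ∀ i : Fin d, ∫ z in B1, ∑ j, ((1/2) * A (EuclideanSpace.single i (1:ℝ))
            (EuclideanSpace.single j (1:ℝ))) * (γ ‖z‖ * (z i * z j))
        = ∑ j, ∫ z in B1, ((1/2) * A (EuclideanSpace.single i (1:ℝ))
            (EuclideanSpace.single j (1:ℝ))) * (γ ‖z‖ * (z i * z j)) :=
      fun i => integral_finset_sum _ fun j _ => (hintc i j).const_mul _
    have e2 : ∫ z in B1, ∑ i, ∑ j, ((1/2) * A (EuclideanSpace.single i (1:ℝ))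
            (EuclideanSpace.single j (1:ℝ))) * (γ ‖z‖ * (z i * z j))
        = ∑ i, ∫ z in B1, ∑ j, ((1/2) * A (EuclideanSpace.single i (1:ℝ))
            (EuclideanSpace.single j (1:ℝ))) * (γ ‖z‖ * (z i * z j)) :=
      integral_finset_sum _ fun i _ => integrable_finset_sum _
        fun j _ => (hintc i j).const_mul _
    have e4 : ∀ i j : Fin d, ∫ z in B1, ((1/2) * A (EuclideanSpace.single i (1:ℝ))
            (EuclideanSpace.single j (1:ℝ))) * (γ ‖z‖ * (z i * z j))
        = ((1/2) * A (EuclideanSpace.single i (1:ℝ))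
            (EuclideanSpace.single j (1:ℝ))) * ∫ z in B1, γ ‖z‖ * (z i * z j) :=
      fun i j => integral_const_mul _ _
    calc ∫ z in B1, γ ‖z‖ * ((1/2) * A z z)
        = ∑ i, ∑ j, ((1/2) * A (EuclideanSpace.single i (1:ℝ))
            (EuclideanSpace.single j (1:ℝ))) * ∫ z in B1, γ ‖z‖ * (z i * z j) := by
          rw [e1, e2]
          exact Finset.sum_congr rfl fun i _ => by
            rw [e3 i]
            exact Finset.sum_congr rfl fun j _ => e4 i j
      _ = ∑ i, ((1/2) * A (EuclideanSpace.single i (1:ℝ))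
            (EuclideanSpace.single i (1:ℝ))) * M := by
          refine Finset.sum_congr rfl fun i _ => ?_
          rw [Finset.sum_eq_single i]
          · congr 1
            have h1 : (fun z : EuclideanSpace ℝ (Fin d) => γ ‖z‖ * (z i * z i))
                = fun z => γ ‖z‖ * (z i) ^ 2 := by funext z; ring
            rw [h1, integral_sq_coord γ hd i, hM]
            exact integral_congr_ae (Eventually.of_forall fun z => by ring)
          · intro j _ hji
            rw [integral_odd_coord γ (Ne.symm hji), mul_zero]
          · intro h; exact absurd (Finset.mem_univ i) h
      _ = (M / 2) * ∑ i, A (EuclideanSpace.single i (1:ℝ))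
            (EuclideanSpace.single i (1:ℝ)) := by
          rw [Finset.mul_sum]
          exact Finset.sum_congr rfl fun i _ => by ring
  -- eventual equality of the two expressions
  have hev : ∀ᶠ δ in nhdsWithin (0:ℝ) (Set.Ioi 0),
      (δ ^ (d + 2))⁻¹ * ∫ y in Metric.ball x δ, γ (‖y - x‖ / δ) * (u y - u x)
        = ∫ z in B1, Fm δ z := by
    filter_upwards [Ioo_mem_nhdsGT_of_mem (Set.mem_Ico.2 ⟨le_refl 0, hδ₀⟩)] with δ hδ
    have hδ0 : (0:ℝ) < δ := hδ.1
    rw [cov x δ hδ0]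
    have hsimp : ∀ z : EuclideanSpace ℝ (Fin d),
        γ (‖x + δ • z - x‖ / δ) * (u (x + δ • z) - u x)
          = γ ‖z‖ * (u (x + δ • z) - u x) := by
      intro z
      congr 2
      rw [add_sub_cancel_left, norm_smul, Real.norm_eq_abs, abs_of_pos hδ0,
        mul_comm, mul_div_assoc, div_self (ne_of_gt hδ0), mul_one]
    -- integrability of the two pieces
    have meas1 : AEStronglyMeasurable
        (fun z : EuclideanSpace ℝ (Fin d) => u (x + δ • z) - u x - δ * L z)
        (volume.restrict B1) := by
      apply ContinuousOn.aestronglyMeasurable _ measurableSet_ball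
      exact ((hcomp δ hδ).sub continuousOn_const).sub
        (continuous_const.mul L.continuous).continuousOn
    have key1 : IntegrableOn
        (fun z : EuclideanSpace ℝ (Fin d) => γ ‖z‖ * (u (x + δ • z) - u x - δ * L z))
        B1 := by
      refine hdom _ meas1 (C * δ ^ 2) ?_
      filter_upwards [hae] with z hz
      have hδz : ‖δ • z‖ < ρ := by
        rw [norm_smul, Real.norm_eq_abs, abs_of_pos hδ0]
        calc δ * ‖z‖ ≤ δ * 1 := by nlinarith [hδ0]
          _ = δ := mul_one δ
          _ < δ₀ := hδ.2
          _ ≤ ρ := min_le_left _ _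
      have h1 := htb (δ • z) hδz
      have hLs : L (δ • z) = δ * L z := by rw [_root_.map_smul]; rfl
      have hns : ‖δ • z‖ ^ 2 = δ ^ 2 * ‖z‖ ^ 2 := by
        rw [norm_smul, Real.norm_eq_abs, abs_of_pos hδ0]; ring
      rw [hLs, hns] at h1
      have h9 : ‖z‖ ^ 2 ≤ ‖z‖ := by nlinarith [norm_nonneg z, hz.2]
      calc |u (x + δ • z) - u x - δ * L z| ≤ C * (δ ^ 2 * ‖z‖ ^ 2) := h1
        _ = (C * δ ^ 2) * ‖z‖ ^ 2 := by ring
        _ ≤ (C * δ ^ 2) * ‖z‖ := mul_le_mul_of_nonneg_left h9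
            (mul_nonneg hCpos.le (sq_nonneg δ))
        _ = C * δ ^ 2 * ‖z‖ := rfl
    have key2 : IntegrableOn
        (fun z : EuclideanSpace ℝ (Fin d) => γ ‖z‖ * (δ * L z)) B1 := by
      refine hdom _ ((continuous_const.mul L.continuous).aestronglyMeasurable) (δ * ‖L‖) ?_
      refine ae_of_all _ fun z => ?_
      rw [abs_mul, abs_of_pos hδ0]
      have := L.le_opNorm z
      calc δ * |L z| ≤ δ * (‖L‖ * ‖z‖) := by
            apply mul_le_mul_of_nonneg_left _ hδ0.le
            calc |L z| = ‖L z‖ := rfl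
              _ ≤ ‖L‖ * ‖z‖ := L.le_opNorm z
        _ = δ * ‖L‖ * ‖z‖ := by ring
    have hsplit : (fun z : EuclideanSpace ℝ (Fin d) => γ ‖z‖ * (u (x + δ • z) - u x))
        = fun z => γ ‖z‖ * (u (x + δ • z) - u x - δ * L z) + γ ‖z‖ * (δ * L z) := by
      funext z; ring
    have hLzero : ∫ z in B1, γ ‖z‖ * (δ * L z) = 0 := by
      have h1 : (fun z : EuclideanSpace ℝ (Fin d) => γ ‖z‖ * (δ * L z))
          = fun z => δ * (γ ‖z‖ * L z) := by funext z; ring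
      rw [h1, integral_const_mul, integral_odd_linear γ L, mul_zero]
    have hFm1 : ∫ z in B1, Fm δ z
        = (δ ^ 2)⁻¹ * ∫ z in B1, γ ‖z‖ * (u (x + δ • z) - u x - δ * L z) := by
      rw [← integral_const_mul]
      refine integral_congr_ae (ae_of_all _ fun z => ?_)
      rw [hFm]; ring
    simp only [hsimp, hsplit]
    rw [integral_add key1 key2, hLzero, add_zero, hFm1]
    rw [← mul_assoc]
    congr 1
    rw [pow_add]
    field_simp
  -- conclude
  have hfin : (M / 2) * laplacian d u x = ∫ z in B1, γ ‖z‖ * ((1/2) * A z z) := by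
    rw [hlap, hval]
  rw [hfin]
  exact hmain.congr' (hev.mono fun δ h => h.symm)
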